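/- arXiv:2406.06945 — 3 statements merged into one kernel-verified Lean document; each statement's English description precedes it below -/
import Mathlib

section
/- Let Y be a real-valued random variable with all absolute moments finite and fix a nonzero real λ. Then for all integers n≥k≥1, S_{1,λ}^Y(n,k) = (1/k) Σ_{j=k−1}^{n−1} C(n,j) (−1)^{n−j−1} S_{1,λ}^Y(j,k−1) κ_{n−j,λ}(Y), where C(n,j) is the binomial coefficient. -/
open MeasureTheory Finset

noncomputable section

/-- The degenerate falling factorial `(x)_{n,λ} = x(x-λ)⋯(x-(n-1)λ)`. -/
def dff (lam x : ℝ) (n : ℕ) : ℝ := ∏ i ∈ Finset.range n, (x - i * lam)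

/-- The degenerate rising factorial `⟨x⟩_{n,λ} = x(x+λ)⋯(x+(n-1)λ)`. -/
def drf (lam x : ℝ) (n : ℕ) : ℝ := ∏ i ∈ Finset.range n, (x + i * lam)

/-- The ordinary falling factorial `(x)_n = x(x-1)⋯(x-n+1)`. -/
def ffall (x : ℝ) (n : ℕ) : ℝ := ∏ i ∈ Finset.range n, (x - i)

/-- The ordinary rising factorial `⟨x⟩_n = x(x+1)⋯(x+n-1)`. -/
def frise (x : ℝ) (n : ℕ) : ℝ := ∏ i ∈ Finset.range n, (x + i)

/-- Composition `f ∘ g` of formal power series, valid when `g` has zero constant term. -/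
def pscomp (f g : PowerSeries ℝ) : PowerSeries ℝ :=
  PowerSeries.mk fun n =>
    ∑ k ∈ Finset.range (n + 1), PowerSeries.coeff k f * PowerSeries.coeff n (g ^ k)

/-- The degenerate moment generating series `F_Y = Σ_{n≥0} E[(Y)_{n,λ}] X^n/n!`. -/
def momSeries (lam : ℝ) {Ω : Type*} [MeasurableSpace Ω] (μ : Measure Ω) (Y : Ω → ℝ) :
    PowerSeries ℝ :=
  PowerSeries.mk fun n => (∫ ω, dff lam (Y ω) n ∂μ) / (n.factorial : ℝ)

/-- Taylor series at `u = 0` of the degenerate logarithm `log_λ(1+u)`: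
`Σ_{n≥1} λ^{n-1} (1)_{n,1/λ} u^n/n!`. -/
def degLogSeries (lam : ℝ) : PowerSeries ℝ :=
  PowerSeries.mk fun n => if n = 0 then 0 else lam ^ (n - 1) * dff (1 / lam) 1 n / (n.factorial : ℝ)

/-- `G_Y`, the degenerate cumulant generating series `log_{-λ}(F_Y)`, i.e. the substitution of
`F_Y - 1` into the Taylor series of `log_{-λ}(1+u)`. -/
def cumSeries (lam : ℝ) {Ω : Type*} [MeasurableSpace Ω] (μ : Measure Ω) (Y : Ω → ℝ) :
    PowerSeries ℝ :=
  pscomp (degLogSeries (-lam)) (momSeries lam μ Y - 1)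

/-- The degenerate cumulants `κ_{n,λ}(Y) := n!·(coefficient of X^n in G_Y)`. -/
def degCumulant (lam : ℝ) {Ω : Type*} [MeasurableSpace Ω] (μ : Measure Ω) (Y : Ω → ℝ)
    (n : ℕ) : ℝ :=
  (n.factorial : ℝ) * PowerSeries.coeff n (cumSeries lam μ Y)

/-- The probabilistic degenerate Stirling numbers of the second kind
`{n brace k}_{Y,λ} := n!·(coefficient of X^n in (F_Y - 1)^k/k!)`. -/
def braceY (lam : ℝ) {Ω : Type*} [MeasurableSpace Ω] (μ : Measure Ω) (Y : Ω → ℝ)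
    (n k : ℕ) : ℝ :=
  (n.factorial : ℝ) * PowerSeries.coeff n ((momSeries lam μ Y - 1) ^ k) / (k.factorial : ℝ)

/-- The probabilistic degenerate Stirling numbers of the first kind, defined by
`(-1)^{n-k} S_{1,λ}^Y(n,k) := n!·(coefficient of X^n in G_Y^k/k!)`. -/
def S1Y (lam : ℝ) {Ω : Type*} [MeasurableSpace Ω] (μ : Measure Ω) (Y : Ω → ℝ)
    (n k : ℕ) : ℝ :=
  (-1 : ℝ) ^ (n - k) * ((n.factorial : ℝ) * PowerSeries.coeff n ((cumSeries lam μ Y) ^ k) / (k.factorial : ℝ))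

/-- Taylor series of `log(1+u)`: `Σ_{n≥1} (-1)^{n-1} u^n/n`. -/
def logSeries : PowerSeries ℝ :=
  PowerSeries.mk fun n => if n = 0 then 0 else (-1 : ℝ) ^ (n - 1) / n

/-- `F^x := exp (x · Log F)` for a power series `F` with constant term `1`. -/
def psPow (F : PowerSeries ℝ) (x : ℝ) : PowerSeries ℝ :=
  pscomp (PowerSeries.exp ℝ) (PowerSeries.C x * pscomp logSeries (F - 1))

/-- `F ↦ F/X`, i.e. the shift sending `Σ a_{n+1} X^{n+1}` (with `a_0 = 0`) to `Σ a_{n+1} X^n`. -/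
def shiftDown (F : PowerSeries ℝ) : PowerSeries ℝ :=
  PowerSeries.mk fun n => PowerSeries.coeff (n + 1) F

/-- The probabilistic degenerate Bernoulli polynomials associated with `Y`:
`Σ_{n≥0} β_{n,λ}^Y(x) X^n/n! = (X/(F_Y-1))·F_Y^x`. -/
def probBernoulli (lam : ℝ) {Ω : Type*} [MeasurableSpace Ω] (μ : Measure Ω) (Y : Ω → ℝ)
    (n : ℕ) (x : ℝ) : ℝ :=
  (n.factorial : ℝ) *
    PowerSeries.coeff n ((shiftDown (momSeries lam μ Y - 1))⁻¹ * psPow (momSeries lam μ Y) x)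

/-- The probabilistic degenerate Euler polynomials associated with `Y`:
`Σ_{n≥0} 𝓔_{n,λ}^Y(x) X^n/n! = (2/(F_Y+1))·F_Y^x`. -/
def probEuler (lam : ℝ) {Ω : Type*} [MeasurableSpace Ω] (μ : Measure Ω) (Y : Ω → ℝ)
    (n : ℕ) (x : ℝ) : ℝ :=
  (n.factorial : ℝ) *
    PowerSeries.coeff n
      (PowerSeries.C (2 : ℝ) * (momSeries lam μ Y + 1)⁻¹ * psPow (momSeries lam μ Y) x)

lemma coeff_pow_eq_zero_of_lt {f : PowerSeries ℝ} (hf : PowerSeries.constantCoeff f = 0)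
    {m j : ℕ} (hj : j < m) : PowerSeries.coeff j (f ^ m) = 0 := by
  have h1 : (PowerSeries.X : PowerSeries ℝ) ∣ f := PowerSeries.X_dvd_iff.mpr hf
  have h2 : (PowerSeries.X : PowerSeries ℝ) ^ m ∣ f ^ m := pow_dvd_pow_of_dvd h1 m
  exact PowerSeries.X_pow_dvd_iff.mp h2 j hj

theorem S1Y_recurrence {Ω : Type*} [MeasurableSpace Ω] (μ : MeasureTheory.Measure Ω)
    [MeasureTheory.IsProbabilityMeasure μ] (Y : Ω → ℝ) (hY : Measurable Y)
    (hmom : ∀ n : ℕ, MeasureTheory.Integrable (fun ω => |Y ω| ^ n) μ)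
    (lam : ℝ) (hlam : lam ≠ 0)
    (n k : ℕ) (hk : 1 ≤ k) (hkn : k ≤ n) :
    S1Y lam μ Y n k =
      (1 / (k : ℝ)) * ∑ j ∈ Finset.Icc (k - 1) (n - 1),
        (n.choose j : ℝ) * (-1 : ℝ) ^ (n - j - 1) * S1Y lam μ Y j (k - 1) *
          degCumulant lam μ Y (n - j) := by
  have hc0 : PowerSeries.constantCoeff (cumSeries lam μ Y) = 0 := by
    simp [cumSeries, pscomp, degLogSeries, PowerSeries.coeff_mk, Finset.sum_range_one]
  set G := cumSeries lam μ Y with hG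
  set a : ℕ → ℝ := fun j => PowerSeries.coeff j (G ^ (k - 1)) with ha
  set b : ℕ → ℝ := fun i => PowerSeries.coeff i G with hb
  have key : PowerSeries.coeff n (G ^ k) =
      ∑ j ∈ Finset.Icc (k - 1) (n - 1), a j * b (n - j) := by
    have hGk : G ^ k = G ^ (k - 1) * G := by
      conv_lhs => rw [← Nat.succ_pred_eq_of_pos (by omega : 0 < k)]
      rw [pow_succ]
      rfl
    rw [hGk, PowerSeries.coeff_mul, Finset.Nat.sum_antidiagonal_eq_sum_range_succ_mk]
    refine (Finset.sum_subset ?_ ?_).symm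
    · intro x hx
      simp only [Finset.mem_Icc] at hx
      simp only [Finset.mem_range]
      omega
    · intro x hx hx2
      simp only [Finset.mem_range] at hx
      simp only [Finset.mem_Icc, not_and_or, not_le] at hx2
      rcases hx2 with h | h
      · have : PowerSeries.coeff x (G ^ (k - 1)) = 0 :=
          coeff_pow_eq_zero_of_lt hc0 h
        simp [this]
      · have hxn : x = n := by omega
        rw [hxn, Nat.sub_self]
        have hb0 : PowerSeries.coeff 0 G = 0 := by simpa using hc0
        simp [hb0]
  have hS1 : ∀ j m : ℕ, S1Y lam μ Y j m =
      (-1 : ℝ) ^ (j - m) * ((j.factorial : ℝ) * PowerSeries.coeff j (G ^ m) / (m.factorial : ℝ)) :=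
    fun j m => rfl
  have hκ : ∀ i : ℕ, degCumulant lam μ Y i = (i.factorial : ℝ) * b i := fun i => rfl
  rw [hS1 n k, key, Finset.mul_sum, Finset.sum_div, Finset.mul_sum, Finset.mul_sum]
  refine Finset.sum_congr rfl ?_
  intro j hj
  simp only [Finset.mem_Icc] at hj
  rw [hS1 j (k - 1), hκ (n - j)]
  have hjn : j ≤ n := by omega
  have hsign : ((-1 : ℝ)) ^ (n - k) = (-1 : ℝ) ^ (n - j - 1) * (-1 : ℝ) ^ (j - (k - 1)) := by
    rw [← pow_add]
    congr 1
    omega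
  have hfact : ((n.choose j : ℕ) : ℝ) * (j.factorial : ℝ) * ((n - j).factorial : ℝ)
      = (n.factorial : ℝ) := by
    rw [← Nat.cast_mul, ← Nat.cast_mul, Nat.choose_mul_factorial_mul_factorial hjn]
  have hkfact : (k.factorial : ℝ) = (k : ℝ) * ((k - 1).factorial : ℝ) := by
    rw [← Nat.cast_mul]
    norm_cast
    rw [← Nat.succ_pred_eq_of_pos (by omega : 0 < k)]
    rw [Nat.factorial_succ]
    simp
  have hk0 : (k : ℝ) ≠ 0 := by positivity
  have hkf0 : ((k - 1).factorial : ℝ) ≠ 0 := by positivity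
  have hcoeff : PowerSeries.coeff j (G ^ (k - 1)) = a j := rfl
  rw [hsign, hkfact, ← hfact, hcoeff]
  field_simp


end
end

section
/- Let Y be a real-valued random variable with all absolute moments finite and fix a nonzero real λ. Then for all integers n≥k≥1, {n brace k}_{Y,λ} = (1/k) Σ_{j=k−1}^{n−1} C(n,j) {j brace k−1}_{Y,λ} E[(Y)_{n−j,λ}], where C(n,j) is the binomial coefficient; in particular, {k brace k}_{Y,λ} = (E[Y])^k for every k≥1. -/
open MeasureTheory Finset

noncomputable section

lemma coeff_pow_eq_zero (G : PowerSeries ℝ) (h0 : PowerSeries.coeff 0 G = 0) :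
    ∀ k n : ℕ, n < k → PowerSeries.coeff n (G ^ k) = 0 := by
  intro k
  induction k with
  | zero => intro n hn; omega
  | succ k ih =>
    intro n hn
    rw [pow_succ, PowerSeries.coeff_mul]
    refine Finset.sum_eq_zero fun p hp => ?_
    rw [Finset.HasAntidiagonal.mem_antidiagonal] at hp
    rcases Nat.eq_zero_or_pos p.2 with h2 | h2
    · rw [h2, h0, mul_zero]
    · rw [ih p.1 (by omega), zero_mul]

lemma coeff_zero_G {Ω : Type*} [MeasurableSpace Ω] (μ : Measure Ω) [IsProbabilityMeasure μ]
    (Y : Ω → ℝ) (lam : ℝ) : PowerSeries.coeff 0 (momSeries lam μ Y - 1) = 0 := by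
  simp [momSeries, dff, PowerSeries.coeff_mk]

lemma coeff_G {Ω : Type*} [MeasurableSpace Ω] (μ : Measure Ω) (Y : Ω → ℝ) (lam : ℝ)
    (m : ℕ) (hm : 1 ≤ m) :
    PowerSeries.coeff m (momSeries lam μ Y - 1) = (∫ ω, dff lam (Y ω) m ∂μ) / (m.factorial : ℝ) := by
  rw [map_sub, PowerSeries.coeff_one, if_neg (by omega), sub_zero, momSeries, PowerSeries.coeff_mk]

lemma braceY_rec {Ω : Type*} [MeasurableSpace Ω] (μ : Measure Ω) [IsProbabilityMeasure μ]
    (Y : Ω → ℝ) (lam : ℝ) (n k : ℕ) (hk : 1 ≤ k) (hkn : k ≤ n) :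
    braceY lam μ Y n k =
      (1 / (k : ℝ)) * ∑ j ∈ Finset.Icc (k - 1) (n - 1),
        (n.choose j : ℝ) * braceY lam μ Y j (k - 1) * (∫ ω, dff lam (Y ω) (n - j) ∂μ) := by
  obtain ⟨m, rfl⟩ : ∃ m, k = m + 1 := ⟨k - 1, by omega⟩
  simp only [Nat.add_sub_cancel]
  have h0 := coeff_zero_G μ Y lam
  rw [braceY, pow_succ, PowerSeries.coeff_mul,
    Finset.Nat.sum_antidiagonal_eq_sum_range_succ (fun a b => PowerSeries.coeff a ((momSeries lam μ Y - 1) ^ m) * PowerSeries.coeff b (momSeries lam μ Y - 1))]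
  have hsub : Finset.Icc m (n - 1) ⊆ Finset.range (n + 1) := by
    intro x hx; rw [Finset.mem_Icc] at hx; rw [Finset.mem_range]; omega
  rw [← Finset.sum_subset hsub (fun x hx hxs => ?_)]
  · rw [Finset.mul_sum, Finset.sum_div, Finset.mul_sum]
    refine Finset.sum_congr rfl fun j hj => ?_
    rw [Finset.mem_Icc] at hj
    have hj1 : 1 ≤ n - j := by omega
    rw [coeff_G μ Y lam _ hj1, braceY]
    set c := PowerSeries.coeff j ((momSeries lam μ Y - 1) ^ m) with hcdef
    set I := ∫ ω, dff lam (Y ω) (n - j) ∂μ with hIdef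
    have hc : ((n.choose j : ℕ) : ℝ) * (j.factorial : ℝ) * ((n - j).factorial : ℝ) = (n.factorial : ℝ) := by
      exact_mod_cast congrArg (Nat.cast : ℕ → ℝ) (Nat.choose_mul_factorial_mul_factorial (by omega : j ≤ n))
    have hfj : (j.factorial : ℝ) ≠ 0 := Nat.cast_ne_zero.mpr j.factorial_ne_zero
    have hfnj : ((n - j).factorial : ℝ) ≠ 0 := Nat.cast_ne_zero.mpr (n - j).factorial_ne_zero
    have hfm : (m.factorial : ℝ) ≠ 0 := Nat.cast_ne_zero.mpr m.factorial_ne_zero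
    have hm1 : ((m : ℝ) + 1) ≠ 0 := by positivity
    rw [Nat.factorial_succ]
    push_cast
    field_simp
    ring_nf
    linear_combination (-(c * I)) * hc
  · rw [Finset.mem_range] at hx
    rw [Finset.mem_Icc] at hxs
    rcases Nat.lt_or_ge x m with h | h
    · rw [coeff_pow_eq_zero _ h0 m x h, zero_mul]
    · have : x = n := by omega
      subst this
      rw [Nat.sub_self, h0, mul_zero]

lemma braceY_diag {Ω : Type*} [MeasurableSpace Ω] (μ : Measure Ω) [IsProbabilityMeasure μ]
    (Y : Ω → ℝ) (lam : ℝ) : ∀ k : ℕ, braceY lam μ Y k k = (∫ ω, Y ω ∂μ) ^ k := by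
  intro k
  induction k with
  | zero => simp [braceY]
  | succ k ih =>
    rw [braceY_rec μ Y lam (k + 1) (k + 1) (by omega) le_rfl]
    simp only [Nat.add_sub_cancel, Finset.Icc_self, Finset.sum_singleton, ih,
      Nat.choose_succ_self_right]
    have hd : (∫ ω, dff lam (Y ω) (k + 1 - k) ∂μ) = ∫ ω, Y ω ∂μ := by
      simp [dff, Nat.add_sub_cancel_left]
    rw [hd, pow_succ]
    have : ((k : ℝ) + 1) ≠ 0 := by positivity
    push_cast
    field_simp

theorem braceY_recurrence_and_diag {Ω : Type*} [MeasurableSpace Ω] (μ : MeasureTheory.Measure Ω)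
    [MeasureTheory.IsProbabilityMeasure μ] (Y : Ω → ℝ) (hY : Measurable Y)
    (hmom : ∀ n : ℕ, MeasureTheory.Integrable (fun ω => |Y ω| ^ n) μ)
    (lam : ℝ) (hlam : lam ≠ 0) :
    (∀ n k : ℕ, 1 ≤ k → k ≤ n →
        braceY lam μ Y n k =
          (1 / (k : ℝ)) * ∑ j ∈ Finset.Icc (k - 1) (n - 1),
            (n.choose j : ℝ) * braceY lam μ Y j (k - 1) * (∫ ω, dff lam (Y ω) (n - j) ∂μ)) ∧
      ∀ k : ℕ, 1 ≤ k → braceY lam μ Y k k = (∫ ω, Y ω ∂μ) ^ k := by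
  exact ⟨fun n k hk hkn => braceY_rec μ Y lam n k hk hkn,
    fun k _ => braceY_diag μ Y lam k⟩

end
end

section
/- Let Y be a real-valued random variable with all absolute moments finite and E[Y]≠0, and fix a nonzero real λ. Then for every real number x and every integer n≥0, β_{n,λ}^Y(x) = Σ_{j=0}^{n} Σ_{k=0}^{j} C(n,j) β_{n−j,λ}^Y ⟨x⟩_{k,λ} (−1)^{j−k} S_{1,λ}^Y(j,k), where C(n,j) is the binomial coefficient. -/
open MeasureTheory Finset

noncomputable section

section Toolkit

open PowerSeries Finset

lemma coeff_pscomp (f g : PowerSeries ℝ) (n : ℕ) :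
    PowerSeries.coeff n (pscomp f g)
      = ∑ k ∈ Finset.range (n + 1), PowerSeries.coeff k f * PowerSeries.coeff n (g ^ k) := by
  simp [pscomp]

lemma coeff_pow_zero {g : PowerSeries ℝ} (hg : PowerSeries.constantCoeff g = 0)
    {n k : ℕ} (h : n < k) : PowerSeries.coeff n (g ^ k) = 0 := by
  have hdvd : (PowerSeries.X : PowerSeries ℝ) ^ k ∣ g ^ k :=
    pow_dvd_pow_of_dvd (PowerSeries.X_dvd_iff.mpr hg) k
  exact (PowerSeries.X_pow_dvd_iff.mp hdvd) n h

lemma coeff_eval₂ {g : PowerSeries ℝ} (hg : PowerSeries.constantCoeff g = 0)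
    (p : Polynomial ℝ) (n : ℕ) :
    PowerSeries.coeff n (Polynomial.eval₂ (PowerSeries.C (R := ℝ)) g p)
      = ∑ k ∈ Finset.range (n + 1), p.coeff k * PowerSeries.coeff n (g ^ k) := by
  induction p using Polynomial.induction_on' with
  | add p q hp hq =>
      simp only [Polynomial.eval₂_add, map_add, hp, hq, Polynomial.coeff_add, add_mul,
        Finset.sum_add_distrib]
  | monomial m a =>
      rw [Polynomial.eval₂_monomial, PowerSeries.coeff_C_mul]
      by_cases hm : m ≤ n
      · rw [Finset.sum_eq_single m]
        · simp [Polynomial.coeff_monomial]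
        · intro b _ hb
          simp [Polynomial.coeff_monomial, (Ne.symm hb)]
        · intro h
          exact absurd (Finset.mem_range.mpr (Nat.lt_succ_of_le hm)) h
      · rw [coeff_pow_zero hg (Nat.lt_of_not_le hm), mul_zero]
        refine (Finset.sum_eq_zero fun k hk => ?_).symm
        have : m ≠ k := by
          intro h; exact hm (h ▸ Nat.lt_succ_iff.mp (Finset.mem_range.mp hk))
        simp [Polynomial.coeff_monomial, this]

lemma coeff_pscomp_eq_eval₂ {g : PowerSeries ℝ} (hg : PowerSeries.constantCoeff g = 0)
    (f : PowerSeries ℝ) {a N : ℕ} (h : a < N) :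
    PowerSeries.coeff a (pscomp f g)
      = PowerSeries.coeff a (Polynomial.eval₂ (PowerSeries.C (R := ℝ)) g (PowerSeries.trunc N f)) := by
  rw [coeff_eval₂ hg, coeff_pscomp]
  refine Finset.sum_congr rfl fun k hk => ?_
  rw [PowerSeries.coeff_trunc, if_pos (lt_of_le_of_lt (Nat.lt_succ_iff.mp (Finset.mem_range.mp hk)) h)]

lemma pscomp_mul {g : PowerSeries ℝ} (hg : PowerSeries.constantCoeff g = 0)
    (f₁ f₂ : PowerSeries ℝ) :
    pscomp (f₁ * f₂) g = pscomp f₁ g * pscomp f₂ g := by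
  ext n
  rw [coeff_pscomp_eq_eval₂ hg (f₁ * f₂) (Nat.lt_succ_self n)]
  have step1 : PowerSeries.coeff n
      (Polynomial.eval₂ (PowerSeries.C (R := ℝ)) g (PowerSeries.trunc (n+1) (f₁ * f₂)))
      = PowerSeries.coeff n (Polynomial.eval₂ (PowerSeries.C (R := ℝ)) g
          (PowerSeries.trunc (n+1) f₁ * PowerSeries.trunc (n+1) f₂)) := by
    rw [coeff_eval₂ hg, coeff_eval₂ hg]
    refine Finset.sum_congr rfl fun k hk => ?_
    have hkn : k < n + 1 := Finset.mem_range.mp hk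
    congr 1
    rw [PowerSeries.coeff_trunc, if_pos hkn, Polynomial.coeff_mul, PowerSeries.coeff_mul]
    refine Finset.sum_congr rfl fun p hp => ?_
    have hp' := Finset.HasAntidiagonal.mem_antidiagonal.mp hp
    rw [PowerSeries.coeff_trunc, PowerSeries.coeff_trunc,
      if_pos (lt_of_le_of_lt (le_trans (Nat.le_add_right _ _) hp'.le) hkn),
      if_pos (lt_of_le_of_lt (le_trans (Nat.le_add_left _ _) hp'.le) hkn)]
  rw [step1, Polynomial.eval₂_mul, PowerSeries.coeff_mul, PowerSeries.coeff_mul]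
  refine Finset.sum_congr rfl fun p hp => ?_
  have hp' := Finset.HasAntidiagonal.mem_antidiagonal.mp hp
  rw [← coeff_pscomp_eq_eval₂ hg f₁
      (lt_of_le_of_lt (le_trans (Nat.le_add_right _ _) hp'.le) (Nat.lt_succ_self n)),
    ← coeff_pscomp_eq_eval₂ hg f₂
      (lt_of_le_of_lt (le_trans (Nat.le_add_left _ _) hp'.le) (Nat.lt_succ_self n))]

lemma pscomp_one (g : PowerSeries ℝ) : pscomp 1 g = 1 := by
  ext n
  rw [coeff_pscomp, Finset.sum_eq_single 0]
  · simp
  · intro b _ hb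
    simp [PowerSeries.coeff_one, hb]
  · intro h
    exact absurd (Finset.mem_range.mpr (Nat.succ_pos n)) h

lemma pscomp_pow {g : PowerSeries ℝ} (hg : PowerSeries.constantCoeff g = 0)
    (h : PowerSeries ℝ) (k : ℕ) :
    pscomp (h ^ k) g = (pscomp h g) ^ k := by
  induction k with
  | zero => simp [pscomp_one]
  | succ m ih => rw [pow_succ, pow_succ, pscomp_mul hg, ih]

lemma pscomp_add (f₁ f₂ g : PowerSeries ℝ) :
    pscomp (f₁ + f₂) g = pscomp f₁ g + pscomp f₂ g := by
  ext n
  simp [coeff_pscomp, add_mul, Finset.sum_add_distrib]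

lemma pscomp_C_mul (r : ℝ) (f g : PowerSeries ℝ) :
    pscomp (PowerSeries.C r * f) g = PowerSeries.C r * pscomp f g := by
  ext n
  simp [coeff_pscomp, PowerSeries.coeff_C_mul, Finset.mul_sum, mul_assoc]

lemma constantCoeff_pscomp (f g : PowerSeries ℝ) :
    PowerSeries.constantCoeff (pscomp f g) = PowerSeries.constantCoeff f := by
  rw [← PowerSeries.coeff_zero_eq_constantCoeff_apply, coeff_pscomp]
  simp

lemma coeff_pscomp_mul {g : PowerSeries ℝ} (hg : PowerSeries.constantCoeff g = 0)
    (f w : PowerSeries ℝ) (n : ℕ) :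
    PowerSeries.coeff n (pscomp f g * w)
      = ∑ k ∈ Finset.range (n + 1), PowerSeries.coeff k f * PowerSeries.coeff n (g ^ k * w) := by
  rw [PowerSeries.coeff_mul]
  have key : ∀ p ∈ Finset.HasAntidiagonal.antidiagonal n,
      PowerSeries.coeff p.1 (pscomp f g) * PowerSeries.coeff p.2 w
        = ∑ k ∈ Finset.range (n + 1), PowerSeries.coeff k f *
            (PowerSeries.coeff p.1 (g ^ k) * PowerSeries.coeff p.2 w) := by
    intro p hp
    have hp' := Finset.HasAntidiagonal.mem_antidiagonal.mp hp
    rw [coeff_pscomp, Finset.sum_mul]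
    simp only [mul_assoc]
    refine Finset.sum_subset (Finset.range_subset_range.mpr
      (Nat.succ_le_succ (le_trans (Nat.le_add_right _ _) hp'.le))) fun k _ hk => ?_
    rw [coeff_pow_zero hg (Nat.lt_of_succ_le (Nat.le_of_not_lt
      (fun h => hk (Finset.mem_range.mpr h)))), zero_mul, mul_zero]
  rw [Finset.sum_congr rfl key, Finset.sum_comm]
  refine Finset.sum_congr rfl fun k _ => ?_
  rw [← Finset.mul_sum, PowerSeries.coeff_mul]

end Toolkit

section Toolkit2

open PowerSeries Finset

lemma pscomp_derivative {g : PowerSeries ℝ} (hg : PowerSeries.constantCoeff g = 0)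
    (f : PowerSeries ℝ) :
    PowerSeries.derivative ℝ (pscomp f g)
      = pscomp (PowerSeries.derivative ℝ f) g * PowerSeries.derivative ℝ g := by
  ext m
  rw [PowerSeries.coeff_derivative, coeff_pscomp, coeff_pscomp_mul hg, Finset.sum_mul]
  have e1 : ∀ k ∈ Finset.range (m + 2),
      PowerSeries.coeff k f * PowerSeries.coeff (m+1) (g ^ k) * ((m:ℝ) + 1)
        = PowerSeries.coeff k f * ((k : ℝ) * PowerSeries.coeff m (g ^ (k-1) * PowerSeries.derivative ℝ g)) := by
    intro k _
    rw [mul_assoc]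
    congr 1
    have h2 : PowerSeries.coeff (m+1) (g ^ k) * ((m:ℝ)+1)
        = PowerSeries.coeff m (PowerSeries.derivative ℝ (g ^ k)) := by
      rw [PowerSeries.coeff_derivative]
    rw [h2, Derivation.leibniz_pow, map_nsmul, smul_eq_mul, nsmul_eq_mul]
  rw [Finset.sum_congr rfl e1, Finset.sum_range_succ']
  rw [Nat.cast_zero, zero_mul, mul_zero, add_zero]
  refine Finset.sum_congr rfl fun k _ => ?_
  rw [PowerSeries.coeff_derivative]
  push_cast
  ring

lemma pscomp_X_mul {g : PowerSeries ℝ} (hg : PowerSeries.constantCoeff g = 0)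
    (f : PowerSeries ℝ) :
    pscomp (PowerSeries.X * f) g = g * pscomp f g := by
  ext n
  rw [mul_comm g, coeff_pscomp_mul hg, coeff_pscomp]
  have hterm : ∀ k ∈ Finset.range (n+1), PowerSeries.coeff k f * PowerSeries.coeff n (g ^ k * g)
      = PowerSeries.coeff k f * PowerSeries.coeff n (g ^ (k+1)) := by
    intro k _; rw [← pow_succ]
  rw [Finset.sum_congr rfl hterm, Finset.sum_range_succ', Finset.sum_range_succ,
    coeff_pow_zero hg (Nat.lt_succ_self n), mul_zero, add_zero]
  have h0 : PowerSeries.coeff 0 (PowerSeries.X * f) = 0 := by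
    simp [PowerSeries.coeff_zero_eq_constantCoeff]
  rw [h0, zero_mul, add_zero]
  exact Finset.sum_congr rfl fun k _ => by rw [PowerSeries.coeff_succ_X_mul]

/-- The formal binomial series `(1+X)^y = Σ (y)_n X^n / n!`. -/
def Pb (y : ℝ) : PowerSeries ℝ := PowerSeries.mk fun n => ffall y n / n.factorial

lemma ffall_succ (y : ℝ) (n : ℕ) : ffall y (n+1) = ffall y n * (y - n) :=
  Finset.prod_range_succ _ _

@[simp] lemma constantCoeff_Pb (y : ℝ) : PowerSeries.constantCoeff (Pb y) = 1 := by
  rw [← PowerSeries.coeff_zero_eq_constantCoeff_apply]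
  simp [Pb, ffall]

lemma coeff_X_mul_derivative (A : PowerSeries ℝ) (m : ℕ) :
    PowerSeries.coeff m (PowerSeries.X * PowerSeries.derivative ℝ A)
      = (m : ℝ) * PowerSeries.coeff m A := by
  cases m with
  | zero => simp
  | succ k =>
      rw [PowerSeries.coeff_succ_X_mul, PowerSeries.coeff_derivative]
      push_cast; ring

lemma ode_Pb (y : ℝ) :
    (1 + PowerSeries.X) * PowerSeries.derivative ℝ (Pb y) = PowerSeries.C y * Pb y := by
  ext n
  rw [add_mul, one_mul, map_add, PowerSeries.coeff_C_mul, PowerSeries.coeff_derivative,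
    coeff_X_mul_derivative]
  simp only [Pb, PowerSeries.coeff_mk]
  rw [ffall_succ, Nat.factorial_succ]
  have h1 : (n.factorial : ℝ) ≠ 0 := Nat.cast_ne_zero.mpr (Nat.factorial_ne_zero n)
  have h2 : ((n:ℝ)+1) ≠ 0 := by positivity
  push_cast
  field_simp
  ring

lemma ode_uniq {A : PowerSeries ℝ} {y : ℝ} (h0 : PowerSeries.constantCoeff A = 1)
    (hA : (1 + PowerSeries.X) * PowerSeries.derivative ℝ A = PowerSeries.C y * A) :
    A = Pb y := by
  ext n
  induction n with
  | zero =>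
      rw [PowerSeries.coeff_zero_eq_constantCoeff_apply,
        PowerSeries.coeff_zero_eq_constantCoeff_apply, h0, constantCoeff_Pb]
  | succ m ih =>
      have hco := congrArg (PowerSeries.coeff m) hA
      rw [add_mul, one_mul, map_add, PowerSeries.coeff_C_mul, PowerSeries.coeff_derivative,
        coeff_X_mul_derivative, ih] at hco
      have ihm : PowerSeries.coeff m (Pb y) = ffall y m / m.factorial := by simp [Pb]
      rw [ihm] at hco
      have h1 : (m.factorial : ℝ) ≠ 0 := Nat.cast_ne_zero.mpr (Nat.factorial_ne_zero m)
      have h2 : ((m:ℝ)+1) ≠ 0 := by positivity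
      have hc : (((m:ℝ)+1) * m.factorial) ≠ 0 := mul_ne_zero h2 h1
      have hPb : PowerSeries.coeff (m+1) (Pb y) * (((m:ℝ)+1) * m.factorial)
          = ffall y m * (y - m) := by
        simp only [Pb, PowerSeries.coeff_mk]
        rw [ffall_succ, Nat.factorial_succ]
        push_cast
        rw [div_mul_cancel₀ _ hc]
      have hco' : PowerSeries.coeff (m+1) A * (((m:ℝ)+1) * m.factorial)
          = ffall y m * (y - m) := by
        field_simp at hco
        linear_combination hco
      exact mul_right_cancel₀ hc (by rw [hPb, hco'])


end Toolkit2

section Toolkit3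

open PowerSeries Finset

lemma pscomp_assoc {h g : PowerSeries ℝ} (hh : PowerSeries.constantCoeff h = 0)
    (hg : PowerSeries.constantCoeff g = 0) (f : PowerSeries ℝ) :
    pscomp f (pscomp h g) = pscomp (pscomp f h) g := by
  ext n
  rw [coeff_pscomp, coeff_pscomp]
  have e1 : ∀ k ∈ Finset.range (n+1),
      PowerSeries.coeff k f * PowerSeries.coeff n ((pscomp h g)^k)
        = ∑ j ∈ Finset.range (n+1), PowerSeries.coeff k f *
            (PowerSeries.coeff j (h^k) * PowerSeries.coeff n (g^j)) := by
    intro k _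
    rw [← pscomp_pow hg, coeff_pscomp, Finset.mul_sum]
  rw [Finset.sum_congr rfl e1, Finset.sum_comm]
  refine Finset.sum_congr rfl fun j hj => ?_
  rw [coeff_pscomp, Finset.sum_mul]
  have hjn : j + 1 ≤ n + 1 := Nat.succ_le_succ (Nat.lt_succ_iff.mp (Finset.mem_range.mp hj))
  rw [← Finset.sum_subset (Finset.range_subset_range.mpr hjn) (fun k _ hk =>
    by rw [coeff_pow_zero hh (Nat.lt_of_succ_le (Nat.le_of_not_lt fun hlt =>
        hk (Finset.mem_range.mpr hlt))), zero_mul, mul_zero])]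
  exact Finset.sum_congr rfl fun k _ => by ring

lemma constantCoeff_logSeries : PowerSeries.constantCoeff logSeries = 0 := by
  rw [← PowerSeries.coeff_zero_eq_constantCoeff_apply]; simp [logSeries]

lemma ode_log : (1 + PowerSeries.X) * PowerSeries.derivative ℝ logSeries = 1 := by
  have hD : ∀ m : ℕ, PowerSeries.coeff m (PowerSeries.derivative ℝ logSeries) = (-1:ℝ)^m := by
    intro m
    rw [PowerSeries.coeff_derivative]
    simp only [logSeries, PowerSeries.coeff_mk, Nat.succ_ne_zero, if_false, Nat.add_sub_cancel]
    have h2 : ((m:ℝ)+1) ≠ 0 := by positivity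
    push_cast
    field_simp
  ext n
  rw [add_mul, one_mul, map_add]
  cases n with
  | zero =>
      have h0 : PowerSeries.coeff 0 (PowerSeries.X * PowerSeries.derivative ℝ logSeries) = 0 := by
        simp [PowerSeries.coeff_zero_eq_constantCoeff]
      rw [h0, hD, add_zero]
      simp
  | succ k =>
      rw [PowerSeries.coeff_succ_X_mul, hD, hD, PowerSeries.coeff_one]
      simp [pow_succ]

lemma derivative_exp' : PowerSeries.derivative ℝ (PowerSeries.exp ℝ) = PowerSeries.exp ℝ := by
  ext n
  rw [PowerSeries.coeff_derivative, PowerSeries.coeff_exp, PowerSeries.coeff_exp]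
  rw [show ((n:ℝ)+1) = algebraMap ℚ ℝ ((n:ℚ)+1) by simp]
  rw [← map_mul]
  congr 1
  rw [Nat.factorial_succ]
  have h1 : ((n.factorial : ℚ)) ≠ 0 := Nat.cast_ne_zero.mpr (Nat.factorial_ne_zero n)
  have h2 : ((n:ℚ)+1) ≠ 0 := by positivity
  push_cast
  field_simp

lemma hexp_comp (x : ℝ) :
    pscomp (PowerSeries.exp ℝ) (PowerSeries.C x * logSeries) = Pb x := by
  have hh : PowerSeries.constantCoeff (PowerSeries.C x * logSeries) = 0 := by
    rw [map_mul, constantCoeff_logSeries, mul_zero]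
  apply ode_uniq
  · rw [constantCoeff_pscomp, PowerSeries.constantCoeff_exp]
  · rw [pscomp_derivative hh, derivative_exp']
    have hDh : PowerSeries.derivative ℝ (PowerSeries.C x * logSeries)
        = PowerSeries.C x * PowerSeries.derivative ℝ logSeries := by
      rw [Derivation.leibniz, PowerSeries.derivative_C, smul_zero, add_zero, smul_eq_mul]
    rw [hDh]
    calc (1 + PowerSeries.X) * (pscomp (PowerSeries.exp ℝ) (PowerSeries.C x * logSeries) *
            (PowerSeries.C x * PowerSeries.derivative ℝ logSeries))
        = PowerSeries.C x * pscomp (PowerSeries.exp ℝ) (PowerSeries.C x * logSeries) *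
            ((1 + PowerSeries.X) * PowerSeries.derivative ℝ logSeries) := by ring
      _ = PowerSeries.C x * pscomp (PowerSeries.exp ℝ) (PowerSeries.C x * logSeries) := by
            rw [ode_log, mul_one]

lemma Pb_comp (y z : ℝ) : pscomp (Pb y) (Pb z - 1) = Pb (z * y) := by
  have hg : PowerSeries.constantCoeff (Pb z - 1) = 0 := by
    rw [map_sub, constantCoeff_Pb, map_one, sub_self]
  apply ode_uniq
  · rw [constantCoeff_pscomp, constantCoeff_Pb]
  · have hDg : PowerSeries.derivative ℝ (Pb z - 1) = PowerSeries.derivative ℝ (Pb z) := by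
      rw [map_sub, Derivation.map_one_eq_zero, sub_zero]
    have key : Pb z * pscomp (PowerSeries.derivative ℝ (Pb y)) (Pb z - 1)
        = PowerSeries.C y * pscomp (Pb y) (Pb z - 1) := by
      have e := congrArg (fun w => pscomp w (Pb z - 1)) (ode_Pb y)
      rw [add_mul, one_mul, pscomp_add, pscomp_X_mul hg, pscomp_C_mul] at e
      calc Pb z * pscomp (PowerSeries.derivative ℝ (Pb y)) (Pb z - 1)
          = pscomp (PowerSeries.derivative ℝ (Pb y)) (Pb z - 1)
              + (Pb z - 1) * pscomp (PowerSeries.derivative ℝ (Pb y)) (Pb z - 1) := by ring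
        _ = _ := e
    rw [pscomp_derivative hg, hDg]
    calc (1 + PowerSeries.X) * (pscomp (PowerSeries.derivative ℝ (Pb y)) (Pb z - 1) *
            PowerSeries.derivative ℝ (Pb z))
        = ((1 + PowerSeries.X) * PowerSeries.derivative ℝ (Pb z)) *
            pscomp (PowerSeries.derivative ℝ (Pb y)) (Pb z - 1) := by ring
      _ = PowerSeries.C z * (Pb z * pscomp (PowerSeries.derivative ℝ (Pb y)) (Pb z - 1)) := by
            rw [ode_Pb z]; ring
      _ = PowerSeries.C z * (PowerSeries.C y * pscomp (Pb y) (Pb z - 1)) := by rw [key]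
      _ = PowerSeries.C (z * y) * pscomp (Pb y) (Pb z - 1) := by rw [map_mul]; ring

lemma degLog_eq {c : ℝ} (hc : c ≠ 0) :
    degLogSeries c = PowerSeries.C (1/c) * (Pb c - 1) := by
  have hfac : ∀ m : ℕ, ((m+1).factorial : ℝ) ≠ 0 := fun m =>
    Nat.cast_ne_zero.mpr (Nat.factorial_ne_zero _)
  ext n
  rw [PowerSeries.coeff_C_mul, map_sub]
  cases n with
  | zero =>
      simp [degLogSeries, Pb, ffall]
  | succ m =>
      simp only [degLogSeries, PowerSeries.coeff_mk, Nat.succ_ne_zero, if_false, Pb,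
        PowerSeries.coeff_one, sub_zero, Nat.add_sub_cancel]
      have hkey : c ^ (m+1) * dff (1/c) 1 (m+1) = ffall c (m+1) := by
        rw [show c^(m+1) = ∏ _i ∈ Finset.range (m+1), c from by
          rw [Finset.prod_const, Finset.card_range], dff, ffall, ← Finset.prod_mul_distrib]
        refine Finset.prod_congr rfl fun i _ => ?_
        field_simp
      rw [← hkey]
      field_simp
      ring

lemma pscomp_C_mul_right (f w : PowerSeries ℝ) (c : ℝ) :
    pscomp f (PowerSeries.C c * w)
      = pscomp (PowerSeries.mk fun k => c ^ k * PowerSeries.coeff k f) w := by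
  ext n
  rw [coeff_pscomp, coeff_pscomp]
  refine Finset.sum_congr rfl fun k _ => ?_
  rw [PowerSeries.coeff_mk, mul_pow, ← map_pow, PowerSeries.coeff_C_mul]
  ring

lemma pscomp_zero (f : PowerSeries ℝ) :
    pscomp f 0 = PowerSeries.C (PowerSeries.constantCoeff f) := by
  ext n
  rw [coeff_pscomp, Finset.sum_eq_single 0]
  · rw [pow_zero, ← PowerSeries.coeff_zero_eq_constantCoeff_apply]
    simp [PowerSeries.coeff_one, PowerSeries.coeff_C]
  · intro k _ hk
    rw [zero_pow hk, map_zero, mul_zero]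
  · intro hmem
    exact absurd (Finset.mem_range.mpr (Nat.succ_pos n)) hmem

lemma drfS_rescale {lam : ℝ} (hlam : lam ≠ 0) (x : ℝ) :
    (PowerSeries.mk fun k => (1/(-lam)) ^ k *
        PowerSeries.coeff k (PowerSeries.mk fun j => drf lam x j / j.factorial))
      = Pb (x / (-lam)) := by
  ext k
  rw [PowerSeries.coeff_mk, PowerSeries.coeff_mk, Pb, PowerSeries.coeff_mk]
  have hkey : (1/(-lam)) ^ k * drf lam x k = ffall (x/(-lam)) k := by
    rw [show (1/(-lam))^k = ∏ _i ∈ Finset.range k, (1/(-lam)) from by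
      rw [Finset.prod_const, Finset.card_range], drf, ffall, ← Finset.prod_mul_distrib]
    refine Finset.prod_congr rfl fun i _ => ?_
    field_simp
    ring
  rw [← hkey]
  ring

lemma drf_deglog {lam : ℝ} (hlam : lam ≠ 0) (x : ℝ) :
    pscomp (PowerSeries.mk fun k => drf lam x k / k.factorial) (degLogSeries (-lam)) = Pb x := by
  rw [degLog_eq (neg_ne_zero.mpr hlam), pscomp_C_mul_right, drfS_rescale hlam, Pb_comp,
    show (-lam) * (x / (-lam)) = x from by field_simp]

lemma psPow_eq {F : PowerSeries ℝ} (hF : PowerSeries.constantCoeff (F - 1) = 0) (x : ℝ) :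
    psPow F x = pscomp (Pb x) (F - 1) := by
  have hh : PowerSeries.constantCoeff (PowerSeries.C x * logSeries) = 0 := by
    rw [map_mul, constantCoeff_logSeries, mul_zero]
  unfold psPow
  rw [← pscomp_C_mul, pscomp_assoc hh hF, hexp_comp]

end Toolkit3


theorem probBernoulli_eq_sum_S1Y {Ω : Type*} [MeasurableSpace Ω] (μ : MeasureTheory.Measure Ω)
    [MeasureTheory.IsProbabilityMeasure μ] (Y : Ω → ℝ) (hY : Measurable Y)
    (hmom : ∀ n : ℕ, MeasureTheory.Integrable (fun ω => |Y ω| ^ n) μ)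
    (lam : ℝ) (hlam : lam ≠ 0)
    (hEY : (∫ ω, Y ω ∂μ) ≠ 0) (x : ℝ) (n : ℕ) :
    probBernoulli lam μ Y n x =
      ∑ j ∈ Finset.range (n + 1), ∑ k ∈ Finset.range (j + 1),
        (n.choose j : ℝ) * probBernoulli lam μ Y (n - j) 0 * drf lam x k *
          (-1 : ℝ) ^ (j - k) * S1Y lam μ Y j k := by
  have hg : PowerSeries.constantCoeff (momSeries lam μ Y - 1) = 0 := by
    rw [map_sub, map_one, ← PowerSeries.coeff_zero_eq_constantCoeff_apply]
    simp [momSeries, dff]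
  have hdlog0 : PowerSeries.constantCoeff (degLogSeries (-lam)) = 0 := by
    rw [← PowerSeries.coeff_zero_eq_constantCoeff_apply]
    simp [degLogSeries]
  have hHeq : psPow (momSeries lam μ Y) x
      = pscomp (PowerSeries.mk fun k => drf lam x k / k.factorial) (cumSeries lam μ Y) := by
    rw [psPow_eq hg x]
    simp only [cumSeries]
    rw [pscomp_assoc hdlog0 hg, drf_deglog hlam x]
  have hpow0 : psPow (momSeries lam μ Y) 0 = 1 := by
    simp only [psPow]
    rw [map_zero, zero_mul, pscomp_zero, PowerSeries.constantCoeff_exp, map_one]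
  have hterm : ∀ j ∈ Finset.range (n+1),
      (∑ k ∈ Finset.range (j + 1), (n.choose j : ℝ) * probBernoulli lam μ Y (n - j) 0 *
          drf lam x k * (-1 : ℝ) ^ (j - k) * S1Y lam μ Y j k)
        = (n.factorial : ℝ) *
            (PowerSeries.coeff j (pscomp (PowerSeries.mk fun k => drf lam x k / k.factorial)
                (cumSeries lam μ Y)) *
              PowerSeries.coeff (n - j) ((shiftDown (momSeries lam μ Y - 1))⁻¹)) := by
    intro j hj
    have hj' : j ≤ n := Nat.lt_succ_iff.mp (Finset.mem_range.mp hj)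
    have hβ : probBernoulli lam μ Y (n - j) 0
        = ((n-j).factorial : ℝ) *
            PowerSeries.coeff (n - j) ((shiftDown (momSeries lam μ Y - 1))⁻¹) := by
      simp only [probBernoulli]
      rw [hpow0, mul_one]
    calc (∑ k ∈ Finset.range (j + 1), (n.choose j : ℝ) * probBernoulli lam μ Y (n - j) 0 *
            drf lam x k * (-1 : ℝ) ^ (j - k) * S1Y lam μ Y j k)
        = ∑ k ∈ Finset.range (j + 1), ((n.choose j : ℝ) * probBernoulli lam μ Y (n - j) 0 *
            (j.factorial : ℝ)) * ((drf lam x k / k.factorial) *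
              PowerSeries.coeff j ((cumSeries lam μ Y)^k)) := by
          refine Finset.sum_congr rfl fun k _ => ?_
          simp only [S1Y]
          have h2 : ((-1:ℝ)^(j-k))*((-1:ℝ)^(j-k)) = 1 := by rw [← mul_pow]; norm_num
          linear_combination ((n.choose j : ℝ) * probBernoulli lam μ Y (n - j) 0 * drf lam x k *
            (j.factorial : ℝ) * PowerSeries.coeff j ((cumSeries lam μ Y)^k) / k.factorial) * h2
      _ = ((n.choose j : ℝ) * probBernoulli lam μ Y (n - j) 0 * (j.factorial : ℝ)) *
            PowerSeries.coeff j (pscomp (PowerSeries.mk fun k => drf lam x k / k.factorial)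
              (cumSeries lam μ Y)) := by
          rw [← Finset.mul_sum, coeff_pscomp]
          congr 1
          exact Finset.sum_congr rfl fun k _ => by rw [PowerSeries.coeff_mk]
      _ = (n.factorial : ℝ) *
            (PowerSeries.coeff j (pscomp (PowerSeries.mk fun k => drf lam x k / k.factorial)
                (cumSeries lam μ Y)) *
              PowerSeries.coeff (n - j) ((shiftDown (momSeries lam μ Y - 1))⁻¹)) := by
          rw [hβ]
          have hcn : n.choose j * (n - j).factorial * j.factorial = n.factorial := by
            rw [mul_right_comm]
            exact Nat.choose_mul_factorial_mul_factorial hj'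
          have hc : (n.choose j : ℝ) * ((n-j).factorial : ℝ) * (j.factorial : ℝ)
              = (n.factorial : ℝ) := by exact_mod_cast congrArg (Nat.cast (R := ℝ)) hcn
          linear_combination (PowerSeries.coeff j (pscomp
              (PowerSeries.mk fun k => drf lam x k / k.factorial) (cumSeries lam μ Y)) *
            PowerSeries.coeff (n - j) ((shiftDown (momSeries lam μ Y - 1))⁻¹)) * hc
  rw [Finset.sum_congr rfl hterm, ← Finset.mul_sum]
  simp only [probBernoulli]
  rw [hHeq]
  congr 1
  rw [mul_comm ((shiftDown (momSeries lam μ Y - 1))⁻¹), PowerSeries.coeff_mul,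
    Finset.Nat.sum_antidiagonal_eq_sum_range_succ_mk]


end
end
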